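/- In the ring of formal power series in a single variable z over ℚ(q), the q-exponential satisfies exp_q(z) · exp_{q^{-1}}(-z) = 1, where exp_q(z) = Σ_{n≥0} z^n/((n)_q!). -/
import Mathlib


open PowerSeries

/-- `(n)_q = (q^(2n) - 1)/(q^2 - 1)` in a field. -/
noncomputable def qNum {K : Type*} [Field K] (q : K) (n : ℕ) : K :=
  (q ^ (2 * n) - 1) / (q ^ 2 - 1)

/-- `(n)_q! = (n)_q (n-1)_q ⋯ (1)_q`, with `(0)_q! = 1`. -/
noncomputable def qFact {K : Type*} [Field K] (q : K) (n : ℕ) : K :=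
  ∏ k ∈ Finset.Icc 1 n, qNum q k

section aux
variable {K : Type*} [Field K] {q : K}

lemma qNum_zero : qNum q 0 = 0 := by simp [qNum]

lemma qFact_zero : qFact q 0 = 1 := by simp [qFact]

lemma qFact_succ (n : ℕ) : qFact q (n + 1) = qFact q n * qNum q (n + 1) := by
  rw [qFact, qFact, Finset.prod_Icc_succ_top (by omega)]

lemma hq2_of_hgen (hgen : ∀ n : ℕ, 1 ≤ n → qNum q n ≠ 0) : q ^ 2 - 1 ≠ 0 := by
  intro h
  exact hgen 1 le_rfl (by unfold qNum; norm_num [h])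

lemma qFact_ne_zero (hgen : ∀ n : ℕ, 1 ≤ n → qNum q n ≠ 0) (n : ℕ) :
    qFact q n ≠ 0 := by
  induction n with
  | zero => simp [qFact_zero]
  | succ m ih => rw [qFact_succ]; exact mul_ne_zero ih (hgen (m+1) (by omega))

lemma qNum_split (hgen : ∀ n : ℕ, 1 ≤ n → qNum q n ≠ 0) (j k : ℕ) :
    qNum q (j + k) = qNum q j + q ^ (2 * j) * qNum q k := by
  have h2 := hq2_of_hgen hgen
  unfold qNum
  field_simp
  rw [Nat.mul_add, pow_add]
  ring

lemma qNum_inv (hq : q ≠ 0) (hgen : ∀ n : ℕ, 1 ≤ n → qNum q n ≠ 0) (n : ℕ) :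
    q ^ (2 * n) * qNum q⁻¹ (n + 1) = qNum q (n + 1) := by
  have h2 := hq2_of_hgen hgen
  have hiq : (q⁻¹) ^ 2 - 1 ≠ 0 := by
    intro h
    apply h2
    have h1 : (q ^ 2)⁻¹ = 1 := by rw [← inv_pow]; exact sub_eq_zero.mp h
    rw [inv_eq_one.mp h1, sub_self]
  unfold qNum
  rw [mul_div_assoc', div_eq_div_iff hiq h2, inv_pow, inv_pow]
  field_simp
  ring

end aux

section main
variable {K : Type*} [Field K] {q : K}

lemma qFact_inv_eq (hq : q ≠ 0) (hgen : ∀ n : ℕ, 1 ≤ n → qNum q n ≠ 0) (n : ℕ) :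
    qFact q n = q ^ (n * (n - 1)) * qFact q⁻¹ n := by
  induction n with
  | zero => simp [qFact_zero]
  | succ m ih =>
    rw [qFact_succ, qFact_succ, ih, ← qNum_inv hq hgen m]
    have he : (m + 1) * ((m + 1) - 1) = m * (m - 1) + 2 * m := by
      cases m with
      | zero => rfl
      | succ k => simp [Nat.succ_sub_one]; ring
    rw [he, pow_add]
    ring

lemma qFact_inv_inv (hq : q ≠ 0) (hgen : ∀ n : ℕ, 1 ≤ n → qNum q n ≠ 0) (n : ℕ) :
    (qFact q⁻¹ n)⁻¹ = q ^ (n * (n - 1)) * (qFact q n)⁻¹ := by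
  rw [qFact_inv_eq hq hgen n, mul_inv, ← mul_assoc,
    mul_inv_cancel₀ (pow_ne_zero _ hq), one_mul]

lemma qNum_mul_inv_qFact (hgen : ∀ n : ℕ, 1 ≤ n → qNum q n ≠ 0) (m : ℕ) :
    qNum q (m + 1) * (qFact q (m + 1))⁻¹ = (qFact q m)⁻¹ := by
  rw [qFact_succ, mul_inv, mul_comm ((qFact q m)⁻¹), ← mul_assoc,
    mul_inv_cancel₀ (hgen (m + 1) (by omega)), one_mul]

lemma qexp_key (hq : q ≠ 0) (hgen : ∀ n : ℕ, 1 ≤ n → qNum q n ≠ 0) (m : ℕ) :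
    ∑ j ∈ Finset.range (m + 2),
      (-1 : K) ^ j * q ^ (j * (j - 1)) * ((qFact q j)⁻¹ * (qFact q (m + 1 - j))⁻¹) = 0 := by
  have hF := qFact_ne_zero hgen
  set G : ℕ → K := fun i =>
    (-1 : K) ^ i * q ^ (i * (i + 1)) * ((qFact q i)⁻¹ * (qFact q (m - i))⁻¹) with hG
  have hterm : ∀ j ∈ Finset.range (m + 2),
      qNum q (m + 1) *
        ((-1 : K) ^ j * q ^ (j * (j - 1)) * ((qFact q j)⁻¹ * (qFact q (m + 1 - j))⁻¹)) =
      (if j = 0 then 0 else -G (j - 1)) + (if j = m + 1 then 0 else G j) := by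
    intro j hj
    rw [Finset.mem_range] at hj
    by_cases hj0 : j = 0
    · subst hj0
      rw [if_pos rfl, if_neg (show ¬(0 : ℕ) = m + 1 by omega), zero_add]
      simp only [hG, pow_zero, one_mul, Nat.zero_mul, qFact_zero, inv_one, Nat.sub_zero]
      exact qNum_mul_inv_qFact hgen m
    · obtain ⟨i, rfl⟩ : ∃ i, j = i + 1 := ⟨j - 1, by omega⟩
      by_cases hjn : i + 1 = m + 1
      · have hi : i = m := by omega
        subst hi
        rw [if_neg hj0, if_pos rfl, add_zero]
        simp only [hG, Nat.add_sub_cancel, Nat.sub_self, qFact_zero, inv_one, mul_one]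
        rw [show (i + 1) * i = i * (i + 1) from by ring, pow_succ,
          ← qNum_mul_inv_qFact hgen i]
        ring
      · -- middle case : 1 ≤ j ≤ m
        have him : i + 1 ≤ m := by omega
        obtain ⟨e, he⟩ : ∃ e, m + 1 - (i + 1) = e + 1 := ⟨m - i - 1, by omega⟩
        have hsplit := qNum_split hgen (i + 1) (m + 1 - (i + 1))
        rw [show (i + 1) + (m + 1 - (i + 1)) = m + 1 from by omega, he] at hsplit
        rw [he, hsplit, if_neg hj0, if_neg hjn]
        simp only [hG, Nat.add_sub_cancel]
        rw [show m - i = e + 1 from by omega, show m - (i + 1) = e from by omega]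
        rw [qFact_succ i, qFact_succ e]
        rw [show (i + 1) * i = i * (i + 1) from by ring,
          show (i + 1) * (i + 1 + 1) = i * (i + 1) + 2 * (i + 1) from by ring,
          pow_add, pow_succ]
        have hA := hgen (i + 1) (by omega)
        have hB := hgen (e + 1) (by omega)
        have ha := hF i
        have hb := hF e
        set A := qNum q (i + 1) with hAdef
        set B := qNum q (e + 1) with hBdef
        set a := qFact q i with hadef
        set b := qFact q e with hbdef
        field_simp
        ring
  have key : ∑ j ∈ Finset.range (m + 2), qNum q (m + 1) *
      ((-1 : K) ^ j * q ^ (j * (j - 1)) * ((qFact q j)⁻¹ * (qFact q (m + 1 - j))⁻¹)) = 0 := by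
    rw [Finset.sum_congr rfl hterm, Finset.sum_add_distrib]
    have e1 : ∑ j ∈ Finset.range (m + 2), (if j = 0 then 0 else -G (j - 1)) =
        ∑ i ∈ Finset.range (m + 1), -G i := by
      rw [Finset.sum_range_succ']
      simp
    have e2 : ∑ j ∈ Finset.range (m + 2), (if j = m + 1 then 0 else G j) =
        ∑ j ∈ Finset.range (m + 1), G j := by
      rw [Finset.sum_range_succ, if_pos rfl, add_zero]
      exact Finset.sum_congr rfl fun j hj => if_neg (by rw [Finset.mem_range] at hj; omega)
    rw [e1, e2, Finset.sum_neg_distrib, neg_add_cancel]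
  rw [← Finset.mul_sum] at key
  exact (mul_eq_zero.mp key).resolve_left (hgen (m + 1) (by omega))

end main


/-- as formal power series over a field `K` with generic `q`
(i.e. `q ≠ 0` and no `(n)_q` vanishes for `n ≥ 1`),
`exp_q(z) * exp_{q⁻¹}(-z) = 1`, where `exp_q(z) = Σ_n z^n / (n)_q!`. -/
theorem qexp_mul_qexp_inv_neg {K : Type*} [Field K] (q : K) (hq : q ≠ 0)
    (hgen : ∀ n : ℕ, 1 ≤ n → qNum q n ≠ 0) :
    (PowerSeries.mk fun n => (qFact q n)⁻¹) *
      (PowerSeries.mk fun n => (-1 : K) ^ n * (qFact q⁻¹ n)⁻¹) = 1 := by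
  ext n
  rw [coeff_mul, coeff_one]
  simp only [coeff_mk]
  rw [Finset.Nat.sum_antidiagonal_eq_sum_range_succ_mk]
  rcases n with _ | m
  · simp [qFact_zero]
  · rw [if_neg (by omega : ¬ m + 1 = 0)]
    set F : ℕ → K := fun j =>
      (-1 : K) ^ j * q ^ (j * (j - 1)) * ((qFact q j)⁻¹ * (qFact q (m + 1 - j))⁻¹) with hFdef
    have step1 : ∀ k ∈ Finset.range (m + 1 + 1),
        (qFact q k)⁻¹ * ((-1 : K) ^ (m + 1 - k) * (qFact q⁻¹ (m + 1 - k))⁻¹) =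
        F (m + 1 - k) := by
      intro k hk
      rw [Finset.mem_range] at hk
      simp only [hFdef]
      rw [qFact_inv_inv hq hgen, show m + 1 - (m + 1 - k) = k from by omega]
      ring
    rw [Finset.sum_congr rfl step1]
    have hrefl : ∑ k ∈ Finset.range (m + 1 + 1), F (m + 1 - k) =
        ∑ j ∈ Finset.range (m + 1 + 1), F j := by
      rw [← Finset.sum_range_reflect]
      refine Finset.sum_congr rfl fun j hj => ?_
      rw [Finset.mem_range] at hj
      congr 1
      omega
    rw [hrefl]
    exact qexp_key hq hgen m
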